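/- Let λ1, λ2, μ1, μ2 > 0 and define a1 = 1 + (λ1+λ2)/μ1 − μ2λ2/(μ1(μ2+λ1)), a3 = λ1/μ1, a5 = λ1/(μ2+λ1). Then the quadratic p(l) = l² − l(a1 + a5 − 1) + a3·a5 has two distinct real roots, i.e., its discriminant (a1+a5−1)² − 4·a3·a5 is strictly positive. -/

import Mathlib

theorem stmt_1 (l1 l2 m1 m2 : ℝ) (hl1 : 0 < l1) (hl2 : 0 < l2)
    (hm1 : 0 < m1) (hm2 : 0 < m2)
    (a1 : ℝ) (ha1 : a1 = 1 + (l1 + l2) / m1 - m2 * l2 / (m1 * (m2 + l1)))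
    (a3 : ℝ) (ha3 : a3 = l1 / m1)
    (a5 : ℝ) (ha5 : a5 = l1 / (m2 + l1)) :
    0 < (a1 + a5 - 1) ^ 2 - 4 * (a3 * a5) := by
  have hd : (0:ℝ) < m2 + l1 := by linarith
  set x : ℝ := l1 / (m1 * (m2 + l1)) with hx
  have hxpos : 0 < x := by positivity
  have hS : a1 + a5 - 1 = x * (m1 + m2 + l1 + l2) := by
    rw [ha1, ha5, hx]
    field_simp
    ring
  have hP : 4 * (a3 * a5) = 4 * x * l1 := by
    rw [ha3, ha5, hx]
    field_simp
  rw [hS, hP]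
  have key : 4 * m1 * (m2 + l1) < (m1 + m2 + l1 + l2) ^ 2 := by nlinarith [sq_nonneg (m1 - (m2 + l1)), sq_nonneg l2]
  have hx2 : x * (m1 * (m2 + l1)) = l1 := by
    rw [hx]; field_simp
  nlinarith [mul_pos hxpos hxpos, sq_nonneg x]
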